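/- Let a, b, c, d ∈ ℝ with b ≠ 0 and 0 < d < c. On an open set U ⊆ ℝ² containing the origin on which t := 2a x₁ + 2b x₂ satisfies ct + d > 0, a² + b²(t+1) > 0, and E := 1 + 2a x₁ + 2b x₂ > 0, define f(x₁,x₂) = (1/2)·∫_{−d/c}^{2a x₁ + 2b x₂} √((cs+d)/(a² + b²(s+1))) ds. Then f satisfies the Monge–Ampère equation f₁₁f₂₂ − f₁₂² − (a/E)·f₁f₂₂ + b·f₂f₂₂ + (2b/E)·f₁f₁₂ + (b²/E)·f₂² = b²c/E on U, and moreover f₁(0,0)² + f₂(0,0)² < c, where fᵢ and f_{ij} denote first and second partial derivatives. -/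

import Mathlib

open Real

set_option maxHeartbeats 1000000 in

lemma ma_alg (a b c d T s P : ℝ) (hs0 : s ≠ 0)
    (hD : a ^ 2 + b ^ 2 * (T + 1) ≠ 0) (hE : (1 : ℝ) + T ≠ 0)
    (hs2 : s ^ 2 = (c * T + d) / (a ^ 2 + b ^ 2 * (T + 1)))
    (hP : P = 1 / 2 * ((c * (a ^ 2 + b ^ 2 * (T + 1)) - (c * T + d) * b ^ 2) /
      (a ^ 2 + b ^ 2 * (T + 1)) ^ 2 / (2 * s))) :
    P * (2 * a) * (2 * a) * (P * (2 * b) * (2 * b)) - (P * (2 * b) * (2 * a)) ^ 2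
      - a / (1 + T) * (1 / 2 * s * (2 * a)) * (P * (2 * b) * (2 * b))
      + b * (1 / 2 * s * (2 * b)) * (P * (2 * b) * (2 * b))
      + 2 * b / (1 + T) * (1 / 2 * s * (2 * a)) * (P * (2 * b) * (2 * a))
      + b ^ 2 / (1 + T) * (1 / 2 * s * (2 * b)) ^ 2
    = b ^ 2 * c / (1 + T) := by
  subst hP
  have step :
      1 / 2 * ((c * (a ^ 2 + b ^ 2 * (T + 1)) - (c * T + d) * b ^ 2) /
          (a ^ 2 + b ^ 2 * (T + 1)) ^ 2 / (2 * s)) * (2 * a) * (2 * a) *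
        (1 / 2 * ((c * (a ^ 2 + b ^ 2 * (T + 1)) - (c * T + d) * b ^ 2) /
          (a ^ 2 + b ^ 2 * (T + 1)) ^ 2 / (2 * s)) * (2 * b) * (2 * b))
      - (1 / 2 * ((c * (a ^ 2 + b ^ 2 * (T + 1)) - (c * T + d) * b ^ 2) /
          (a ^ 2 + b ^ 2 * (T + 1)) ^ 2 / (2 * s)) * (2 * b) * (2 * a)) ^ 2
      - a / (1 + T) * (1 / 2 * s * (2 * a)) *
        (1 / 2 * ((c * (a ^ 2 + b ^ 2 * (T + 1)) - (c * T + d) * b ^ 2) /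
          (a ^ 2 + b ^ 2 * (T + 1)) ^ 2 / (2 * s)) * (2 * b) * (2 * b))
      + b * (1 / 2 * s * (2 * b)) *
        (1 / 2 * ((c * (a ^ 2 + b ^ 2 * (T + 1)) - (c * T + d) * b ^ 2) /
          (a ^ 2 + b ^ 2 * (T + 1)) ^ 2 / (2 * s)) * (2 * b) * (2 * b))
      + 2 * b / (1 + T) * (1 / 2 * s * (2 * a)) *
        (1 / 2 * ((c * (a ^ 2 + b ^ 2 * (T + 1)) - (c * T + d) * b ^ 2) /
          (a ^ 2 + b ^ 2 * (T + 1)) ^ 2 / (2 * s)) * (2 * b) * (2 * a))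
      + b ^ 2 / (1 + T) * (1 / 2 * s * (2 * b)) ^ 2
      = b ^ 2 * (c * (a ^ 2 + b ^ 2 * (T + 1)) - (c * T + d) * b ^ 2) /
          ((1 + T) * (a ^ 2 + b ^ 2 * (T + 1))) + b ^ 4 * s ^ 2 / (1 + T) := by
    field_simp
    ring
  rw [step, hs2]
  field_simp
  ring

noncomputable def maQ (a b c d : ℝ) (u : ℝ) : ℝ :=
  (c * u + d) / (a ^ 2 + b ^ 2 * (u + 1))

noncomputable def maF (a b c d : ℝ) (u : ℝ) : ℝ :=
  (1 / 2) * ∫ s in (-d / c)..u, Real.sqrt (maQ a b c d s)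

lemma maD_pos {a b c d : ℝ} (hb : b ≠ 0) (hd0 : 0 < d) (hdc : d < c)
    {u : ℝ} (hu : -d / c ≤ u) : 0 < a ^ 2 + b ^ 2 * (u + 1) := by
  have hc : 0 < c := hd0.trans hdc
  have hb2 : 0 < b ^ 2 := by positivity
  have h1 : d / c < 1 := (div_lt_one hc).2 hdc
  have h2 : -(d / c) ≤ u := by rwa [neg_div] at hu
  nlinarith [sq_nonneg a, mul_le_mul_of_nonneg_left (by linarith : 1 - d/c ≤ u + 1) hb2.le]

lemma maN_pos {c d : ℝ} (hd0 : 0 < d) (hdc : d < c)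
    {u : ℝ} (hu : -d / c < u) : 0 < c * u + d := by
  have hc : 0 < c := hd0.trans hdc
  have := (div_lt_iff₀ hc).1 hu
  nlinarith

lemma maF_hasDerivAt {a b c d : ℝ} (hb : b ≠ 0) (hd0 : 0 < d) (hdc : d < c)
    {u : ℝ} (hu : -d / c < u) :
    HasDerivAt (maF a b c d) ((1 / 2) * Real.sqrt (maQ a b c d u)) u := by
  have hc : 0 < c := hd0.trans hdc
  set S : Set ℝ := {v : ℝ | 0 < a ^ 2 + b ^ 2 * (v + 1)} with hS
  have hSopen : IsOpen S := isOpen_lt continuous_const (by continuity)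
  have hcontS : ContinuousOn (fun s => Real.sqrt (maQ a b c d s)) S := by
    apply ContinuousOn.sqrt
    exact ContinuousOn.div (by fun_prop) (by fun_prop) (fun v hv => ne_of_gt hv)
  have hmem : u ∈ S := maD_pos hb hd0 hdc hu.le
  have hsub : Set.uIcc (-d / c) u ⊆ S := by
    rw [Set.uIcc_of_le hu.le]
    intro v hv
    exact maD_pos hb hd0 hdc hv.1
  have hint : IntervalIntegrable (fun s => Real.sqrt (maQ a b c d s))
      MeasureTheory.volume (-d / c) u := (hcontS.mono hsub).intervalIntegrable
  have hmeas : StronglyMeasurableAtFilter (fun s => Real.sqrt (maQ a b c d s)) (nhds u) MeasureTheory.volume :=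
    hcontS.stronglyMeasurableAtFilter hSopen u hmem
  have hct : ContinuousAt (fun s => Real.sqrt (maQ a b c d s)) u :=
    hcontS.continuousAt (hSopen.mem_nhds hmem)
  exact (intervalIntegral.integral_hasDerivAt_right hint hmeas hct).const_mul (1/2)

noncomputable def maR (a b c d : ℝ) (u : ℝ) : ℝ :=
  (c * (a ^ 2 + b ^ 2 * (u + 1)) - (c * u + d) * b ^ 2) / (a ^ 2 + b ^ 2 * (u + 1)) ^ 2

lemma maG_hasDerivAt {a b c d : ℝ} (hb : b ≠ 0) (hd0 : 0 < d) (hdc : d < c)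
    {u : ℝ} (hu : -d / c < u) :
    HasDerivAt (fun v => (1 / 2) * Real.sqrt (maQ a b c d v))
      ((1 / 2) * (maR a b c d u / (2 * Real.sqrt (maQ a b c d u)))) u := by
  have hD : 0 < a ^ 2 + b ^ 2 * (u + 1) := maD_pos hb hd0 hdc hu.le
  have hN := maN_pos hd0 hdc hu
  have h1 : HasDerivAt (fun v : ℝ => c * v + d) c u := by
    simpa using ((hasDerivAt_id u).const_mul c).add_const d
  have h2 : HasDerivAt (fun v : ℝ => a ^ 2 + b ^ 2 * (v + 1)) (b ^ 2) u := by
    simpa using (((hasDerivAt_id u).add_const 1).const_mul (b ^ 2)).const_add (a ^ 2)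
  have hr : HasDerivAt (maQ a b c d) (maR a b c d u) u := by
    exact h1.div h2 (ne_of_gt hD)
  have hq0 : maQ a b c d u ≠ 0 := ne_of_gt (div_pos hN hD)
  exact (hr.sqrt hq0).const_mul (1/2)

theorem monge_ampere_explicit_solution (a b c d : ℝ)
    (hb : b ≠ 0) (hd0 : 0 < d) (hdc : d < c)
    (U : Set (ℝ × ℝ)) (hU : IsOpen U) (h0 : ((0 : ℝ), (0 : ℝ)) ∈ U)
    (hcond : ∀ x ∈ U,
      0 < c * (2 * a * x.1 + 2 * b * x.2) + d ∧
      0 < a ^ 2 + b ^ 2 * ((2 * a * x.1 + 2 * b * x.2) + 1) ∧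
      0 < 1 + 2 * a * x.1 + 2 * b * x.2)
    (f : ℝ × ℝ → ℝ)
    (hf : ∀ x ∈ U, f x = (1 / 2) *
      ∫ s in (-d / c)..(2 * a * x.1 + 2 * b * x.2),
        Real.sqrt ((c * s + d) / (a ^ 2 + b ^ 2 * (s + 1))))
    (f1 f2 f11 f12 f22 : ℝ × ℝ → ℝ)
    (hf1 : ∀ x : ℝ × ℝ, f1 x = deriv (fun t => f (t, x.2)) x.1)
    (hf2 : ∀ x : ℝ × ℝ, f2 x = deriv (fun t => f (x.1, t)) x.2)
    (hf11 : ∀ x : ℝ × ℝ, f11 x = deriv (fun t => f1 (t, x.2)) x.1)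
    (hf12 : ∀ x : ℝ × ℝ, f12 x = deriv (fun t => f1 (x.1, t)) x.2)
    (hf22 : ∀ x : ℝ × ℝ, f22 x = deriv (fun t => f2 (x.1, t)) x.2) :
    (∀ x ∈ U,
      f11 x * f22 x - f12 x ^ 2
        - (a / (1 + 2 * a * x.1 + 2 * b * x.2)) * f1 x * f22 x
        + b * f2 x * f22 x
        + (2 * b / (1 + 2 * a * x.1 + 2 * b * x.2)) * f1 x * f12 x
        + (b ^ 2 / (1 + 2 * a * x.1 + 2 * b * x.2)) * f2 x ^ 2
      = b ^ 2 * c / (1 + 2 * a * x.1 + 2 * b * x.2)) ∧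
    f1 (0, 0) ^ 2 + f2 (0, 0) ^ 2 < c := by
  have hc : 0 < c := hd0.trans hdc
  have hTlt : ∀ y ∈ U, -d / c < 2 * a * y.1 + 2 * b * y.2 := by
    intro y hy
    have hN := (hcond y hy).1
    rw [div_lt_iff₀ hc]
    nlinarith
  have hfe : ∀ y ∈ U, f y = maF a b c d (2 * a * y.1 + 2 * b * y.2) := by
    intro y hy; rw [hf y hy]; rfl
  have hF1 : ∀ y ∈ U, f1 y =
      1 / 2 * Real.sqrt (maQ a b c d (2 * a * y.1 + 2 * b * y.2)) * (2 * a) := by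
    intro y hy
    rw [hf1]
    have hop : IsOpen {u : ℝ | (u, y.2) ∈ U} := hU.preimage (by fun_prop)
    have hev : (fun u => f (u, y.2)) =ᶠ[nhds y.1]
        fun u => maF a b c d (2 * a * u + 2 * b * y.2) := by
      filter_upwards [hop.mem_nhds (by simpa using hy)] with u hu
      exact hfe (u, y.2) hu
    rw [hev.deriv_eq]
    have hinner : HasDerivAt (fun u : ℝ => 2 * a * u + 2 * b * y.2) (2 * a) y.1 := by
      simpa using ((hasDerivAt_id y.1).const_mul (2 * a)).add_const (2 * b * y.2)
    exact ((maF_hasDerivAt hb hd0 hdc (hTlt y hy)).comp y.1 hinner).deriv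
  have hF2 : ∀ y ∈ U, f2 y =
      1 / 2 * Real.sqrt (maQ a b c d (2 * a * y.1 + 2 * b * y.2)) * (2 * b) := by
    intro y hy
    rw [hf2]
    have hop : IsOpen {v : ℝ | (y.1, v) ∈ U} := hU.preimage (by fun_prop)
    have hev : (fun v => f (y.1, v)) =ᶠ[nhds y.2]
        fun v => maF a b c d (2 * a * y.1 + 2 * b * v) := by
      filter_upwards [hop.mem_nhds (by simpa using hy)] with v hv
      exact hfe (y.1, v) hv
    rw [hev.deriv_eq]
    have hinner : HasDerivAt (fun v : ℝ => 2 * a * y.1 + 2 * b * v) (2 * b) y.2 := by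
      simpa using ((hasDerivAt_id y.2).const_mul (2 * b)).const_add (2 * a * y.1)
    exact ((maF_hasDerivAt hb hd0 hdc (hTlt y hy)).comp y.2 hinner).deriv
  have hF11 : ∀ x ∈ U, f11 x =
      1 / 2 * (maR a b c d (2 * a * x.1 + 2 * b * x.2) /
        (2 * Real.sqrt (maQ a b c d (2 * a * x.1 + 2 * b * x.2)))) * (2 * a) * (2 * a) := by
    intro x hx
    rw [hf11]
    have hop : IsOpen {u : ℝ | (u, x.2) ∈ U} := hU.preimage (by fun_prop)
    have hev : (fun u => f1 (u, x.2)) =ᶠ[nhds x.1]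
        fun u => 1 / 2 * Real.sqrt (maQ a b c d (2 * a * u + 2 * b * x.2)) * (2 * a) := by
      filter_upwards [hop.mem_nhds (by simpa using hx)] with u hu
      exact hF1 (u, x.2) hu
    rw [hev.deriv_eq]
    have hinner : HasDerivAt (fun u : ℝ => 2 * a * u + 2 * b * x.2) (2 * a) x.1 := by
      simpa using ((hasDerivAt_id x.1).const_mul (2 * a)).add_const (2 * b * x.2)
    exact (((maG_hasDerivAt hb hd0 hdc (hTlt x hx)).comp x.1 hinner).mul_const (2 * a)).deriv
  have hF12 : ∀ x ∈ U, f12 x =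
      1 / 2 * (maR a b c d (2 * a * x.1 + 2 * b * x.2) /
        (2 * Real.sqrt (maQ a b c d (2 * a * x.1 + 2 * b * x.2)))) * (2 * b) * (2 * a) := by
    intro x hx
    rw [hf12]
    have hop : IsOpen {v : ℝ | (x.1, v) ∈ U} := hU.preimage (by fun_prop)
    have hev : (fun v => f1 (x.1, v)) =ᶠ[nhds x.2]
        fun v => 1 / 2 * Real.sqrt (maQ a b c d (2 * a * x.1 + 2 * b * v)) * (2 * a) := by
      filter_upwards [hop.mem_nhds (by simpa using hx)] with v hv
      exact hF1 (x.1, v) hv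
    rw [hev.deriv_eq]
    have hinner : HasDerivAt (fun v : ℝ => 2 * a * x.1 + 2 * b * v) (2 * b) x.2 := by
      simpa using ((hasDerivAt_id x.2).const_mul (2 * b)).const_add (2 * a * x.1)
    have hder : HasDerivAt
        (fun v => 1 / 2 * Real.sqrt (maQ a b c d (2 * a * x.1 + 2 * b * v)) * (2 * a))
        (1 / 2 * (maR a b c d (2 * a * x.1 + 2 * b * x.2) /
          (2 * Real.sqrt (maQ a b c d (2 * a * x.1 + 2 * b * x.2)))) * (2 * b) * (2 * a)) x.2 :=
      ((maG_hasDerivAt hb hd0 hdc (hTlt x hx)).comp x.2 hinner).mul_const (2 * a)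
    exact hder.deriv
  have hF22 : ∀ x ∈ U, f22 x =
      1 / 2 * (maR a b c d (2 * a * x.1 + 2 * b * x.2) /
        (2 * Real.sqrt (maQ a b c d (2 * a * x.1 + 2 * b * x.2)))) * (2 * b) * (2 * b) := by
    intro x hx
    rw [hf22]
    have hop : IsOpen {v : ℝ | (x.1, v) ∈ U} := hU.preimage (by fun_prop)
    have hev : (fun v => f2 (x.1, v)) =ᶠ[nhds x.2]
        fun v => 1 / 2 * Real.sqrt (maQ a b c d (2 * a * x.1 + 2 * b * v)) * (2 * b) := by
      filter_upwards [hop.mem_nhds (by simpa using hx)] with v hv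
      exact hF2 (x.1, v) hv
    rw [hev.deriv_eq]
    have hinner : HasDerivAt (fun v : ℝ => 2 * a * x.1 + 2 * b * v) (2 * b) x.2 := by
      simpa using ((hasDerivAt_id x.2).const_mul (2 * b)).const_add (2 * a * x.1)
    exact (((maG_hasDerivAt hb hd0 hdc (hTlt x hx)).comp x.2 hinner).mul_const (2 * b)).deriv
  constructor
  · intro x hx
    obtain ⟨hN, hD, hE⟩ := hcond x hx
    rw [hF1 x hx, hF2 x hx, hF11 x hx, hF12 x hx, hF22 x hx]
    set T := 2 * a * x.1 + 2 * b * x.2 with hT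
    set s := Real.sqrt (maQ a b c d T) with hs
    have hq : maQ a b c d T = (c * T + d) / (a ^ 2 + b ^ 2 * (T + 1)) := rfl
    have hs0 : 0 < s := by rw [hs, hq]; exact Real.sqrt_pos.2 (div_pos hN hD)
    have hs2 : s ^ 2 = (c * T + d) / (a ^ 2 + b ^ 2 * (T + 1)) := by
      rw [hs, hq]; exact Real.sq_sqrt (div_pos hN hD).le
    have hR : maR a b c d T =
        (c * (a ^ 2 + b ^ 2 * (T + 1)) - (c * T + d) * b ^ 2) / (a ^ 2 + b ^ 2 * (T + 1)) ^ 2 := rfl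
    have hE' : (1 : ℝ) + 2 * a * x.1 + 2 * b * x.2 = 1 + T := by rw [hT]; ring
    have hE2 : (0:ℝ) < 1 + T := by rw [hT]; linarith
    rw [hR, hE']
    linear_combination ma_alg a b c d T s _ hs0.ne' (ne_of_gt hD) (ne_of_gt hE2) hs2 rfl
  · have h1 := hF1 (0, 0) h0
    have h2 := hF2 (0, 0) h0
    have hT0 : 2 * a * ((0 : ℝ), (0 : ℝ)).1 + 2 * b * ((0 : ℝ), (0 : ℝ)).2 = 0 := by norm_num
    rw [hT0] at h1 h2
    have hab : (0 : ℝ) < a ^ 2 + b ^ 2 := by positivity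
    have hq0 : maQ a b c d 0 = d / (a ^ 2 + b ^ 2) := by norm_num [maQ]
    have hsq : Real.sqrt (maQ a b c d 0) ^ 2 * (a ^ 2 + b ^ 2) = d := by
      rw [hq0, Real.sq_sqrt (by positivity : (0:ℝ) ≤ d / (a ^ 2 + b ^ 2))]
      exact div_mul_cancel₀ _ hab.ne'
    rw [h1, h2]
    have key : (1 / 2 * Real.sqrt (maQ a b c d 0) * (2 * a)) ^ 2
        + (1 / 2 * Real.sqrt (maQ a b c d 0) * (2 * b)) ^ 2 = d := by
      linear_combination hsq
    linarith
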